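/- arXiv:1803.07351 — 2 statements merged into one kernel-verified Lean document; each statement's English description precedes it below -/
import Mathlib

section
/- An edge labeling x : E → {0,1} of a finite graph G is a multicut (no cycle contains exactly one active edge) if and only if there exists a partition of V such that x_e = 1 exactly when the endpoints of e lie in different blocks of the partition, where each block is connected in the subgraph of dormant edges. -/
/-- A cycle in a graph with edge-endpoint maps `hd`, `tl`: vertices `v 0, ..., v n` with
`v n = v 0`, pairwise-distinct vertices `v 0, ..., v (n-1)`, pairwise-distinct edges, and
the `i`-th edge joining `v i` and `v (i+1)` (in either orientation). -/
def IsCycle {V E : Type} (hd tl : E → V) {n : ℕ} (v : Fin (n + 1) → V) (c : Fin n → E) : Prop :=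
  0 < n ∧ v (Fin.last n) = v 0 ∧
  Function.Injective (fun i : Fin n => v i.castSucc) ∧
  Function.Injective c ∧
  ∀ i : Fin n, (hd (c i) = v i.castSucc ∧ tl (c i) = v i.succ) ∨
               (tl (c i) = v i.castSucc ∧ hd (c i) = v i.succ)

/-- The number of active edges (`x e = 1`) among the edges of a cycle. -/
def activeCount {E : Type} (x : E → ℕ) {n : ℕ} (c : Fin n → E) : ℕ :=
  (Finset.univ.filter (fun i : Fin n => x (c i) = 1)).card

/-- `x` is a multicut: no cycle contains exactly one active edge. -/
def IsMulticut {V E : Type} (hd tl : E → V) (x : E → ℕ) : Prop :=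
  ∀ (n : ℕ) (v : Fin (n + 1) → V) (c : Fin n → E), IsCycle hd tl v c → activeCount x c ≠ 1

/-- Adjacency via a dormant edge (`x e = 0`). -/
def DormantAdj {V E : Type} (hd tl : E → V) (x : E → ℕ) (u v' : V) : Prop :=
  ∃ e, x e = 0 ∧ ((hd e = u ∧ tl e = v') ∨ (tl e = u ∧ hd e = v'))

lemma dormantAdj_symm {V E : Type} (hd tl : E → V) (x : E → ℕ) {u v' : V}
    (h : DormantAdj hd tl x u v') : DormantAdj hd tl x v' u := by
  obtain ⟨e, he, h1 | h2⟩ := h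
  · exact ⟨e, he, Or.inr ⟨h1.2, h1.1⟩⟩
  · exact ⟨e, he, Or.inl ⟨h2.2, h2.1⟩⟩

/-- Path extraction: from reflexive-transitive dormant reachability between distinct
vertices, extract an injective dormant path. -/
lemma path_extract {V E : Type} (hd tl : E → V) (x : E → ℕ) {a b : V}
    (h : Relation.ReflTransGen (DormantAdj hd tl x) a b) (hne : a ≠ b) :
    ∃ (m : ℕ) (u : ℕ → V) (e : ℕ → E), 0 < m ∧ u 0 = a ∧ u m = b ∧
      (∀ i j, i ≤ m → j ≤ m → u i = u j → i = j) ∧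
      ∀ i, i < m → x (e i) = 0 ∧
        ((hd (e i) = u i ∧ tl (e i) = u (i+1)) ∨ (tl (e i) = u i ∧ hd (e i) = u (i+1))) := by
  induction h with
  | refl => exact absurd rfl hne
  | @tail c b hac hcb ih =>
    by_cases hac' : a = c
    · subst hac'
      obtain ⟨e, he, hor⟩ := hcb
      refine ⟨1, fun i => if i = 0 then a else b, fun _ => e, one_pos, by simp, by simp, ?_, ?_⟩
      · intro i j hi hj hij
        interval_cases i <;> interval_cases j <;> simp_all
      · intro i hi
        have hi0 : i = 0 := by omega
        subst hi0
        simpa using ⟨he, hor⟩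
    · obtain ⟨m, u, e, hm, hu0, hum, hinj, hedge⟩ := ih hac'
      obtain ⟨e', he', hor'⟩ := hcb
      by_cases hb : ∃ k, k ≤ m ∧ u k = b
      · obtain ⟨k, hk, huk⟩ := hb
        have hk0 : 0 < k := by
          rcases Nat.eq_zero_or_pos k with rfl | h
          · exact absurd (hu0 ▸ huk) hne
          · exact h
        exact ⟨k, u, e, hk0, hu0, huk, fun i j hi hj => hinj i j (le_trans hi hk) (le_trans hj hk),
          fun i hi => hedge i (lt_of_lt_of_le hi hk)⟩
      · push_neg at hb
        refine ⟨m + 1, fun i => if i ≤ m then u i else b, fun i => if i < m then e i else e',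
          by omega, ?_, ?_, ?_, ?_⟩
        · simp [hu0]
        · simp
        · intro i j hi hj hij
          by_cases hi' : i ≤ m <;> by_cases hj' : j ≤ m <;> simp only [hi', hj', if_pos, if_neg,
            if_true, if_false] at hij
          · exact hinj i j hi' hj' hij
          · exact absurd hij (hb i hi')
          · exact absurd hij.symm (hb j hj')
          · omega
        · intro i hi
          by_cases hi' : i < m
          · have h1 : i ≤ m := by omega
            have h2 : i + 1 ≤ m := by omega
            simpa only [hi', h1, h2, if_true] using hedge i hi'
          · have hi0 : i = m := by omega
            rw [hi0]
            beta_reduce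
            rw [if_neg (lt_irrefl m), if_pos (le_refl m),
              if_neg (show ¬ (m + 1 ≤ m) by omega)]
            exact ⟨he', by rw [hum]; exact hor'⟩

/-- Key lemma: a multicut cannot have an active edge whose endpoints are dormant-connected. -/
lemma multicut_key {V E : Type} (hd tl : E → V) (x : E → ℕ) (hmc : IsMulticut hd tl x)
    {e₀ : E} (h1 : x e₀ = 1)
    (hR : Relation.ReflTransGen (DormantAdj hd tl x) (hd e₀) (tl e₀)) : False := by
  by_cases hloop : hd e₀ = tl e₀
  · -- self-loop: a cycle of length 1
    apply hmc 1 (fun _ => hd e₀) (fun _ => e₀)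
    · refine ⟨one_pos, rfl, ?_, ?_, ?_⟩
      · intro i j _; exact Subsingleton.elim i j
      · intro i j _; exact Subsingleton.elim i j
      · intro i; exact Or.inl ⟨rfl, hloop.symm⟩
    · simp [activeCount, h1]
  · obtain ⟨m, u, e, hm, hu0, hum, hinj, hedge⟩ := path_extract hd tl x hR hloop
    set v : Fin (m + 1 + 1) → V := fun i => if i.val ≤ m then u i.val else u 0 with hv
    set c : Fin (m + 1) → E := fun i => if i.val < m then e i.val else e₀ with hc
    apply hmc (m + 1) v c
    · refine ⟨by omega, ?_, ?_, ?_, ?_⟩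
      · simp only [hv, Fin.val_last, Fin.val_zero]
        rw [if_neg (by omega)]; exact (ite_self _).symm
      · intro i j hij
        simp only [hv, Fin.coe_castSucc] at hij
        have hi : (i : ℕ) ≤ m := Nat.lt_succ_iff.mp i.isLt
        have hj : (j : ℕ) ≤ m := Nat.lt_succ_iff.mp j.isLt
        rw [if_pos hi, if_pos hj] at hij
        exact Fin.ext (hinj _ _ hi hj hij)
      · intro i j hij
        simp only [hc] at hij
        by_cases hi : i.val < m <;> by_cases hj : j.val < m <;>
          simp only [hi, hj, if_true, if_false] at hij
        · -- both dormant edges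
          obtain ⟨hxi, hoi⟩ := hedge i.val hi
          obtain ⟨hxj, hoj⟩ := hedge j.val hj
          have hile : (i : ℕ) ≤ m := by omega
          have hi1le : (i : ℕ) + 1 ≤ m := by omega
          have hjle : (j : ℕ) ≤ m := by omega
          have hj1le : (j : ℕ) + 1 ≤ m := by omega
          apply Fin.ext
          rcases hoi with ⟨ha, hb⟩ | ⟨ha, hb⟩ <;> rcases hoj with ⟨ha', hb'⟩ | ⟨ha', hb'⟩
          · exact hinj _ _ hile hjle (ha.symm.trans ((congrArg hd hij).trans ha'))
          · have k1 := hinj _ _ hile hj1le (ha.symm.trans ((congrArg hd hij).trans hb'))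
            have k2 := hinj _ _ hi1le hjle (hb.symm.trans ((congrArg tl hij).trans ha'))
            omega
          · have k1 := hinj _ _ hile hj1le (ha.symm.trans ((congrArg tl hij).trans hb'))
            have k2 := hinj _ _ hi1le hjle (hb.symm.trans ((congrArg hd hij).trans ha'))
            omega
          · exact hinj _ _ hile hjle (ha.symm.trans ((congrArg tl hij).trans ha'))
        · have := (hedge i.val hi).1
          rw [hij, h1] at this
          omega
        · have := (hedge j.val hj).1
          rw [← hij, h1] at this
          omega
        · exact Fin.ext (by omega)
      · intro i
        simp only [hv, hc, Fin.coe_castSucc, Fin.val_succ]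
        by_cases hi : i.val < m
        · obtain ⟨_, ho⟩ := hedge i.val hi
          rw [if_pos hi, if_pos (show (i : ℕ) ≤ m by omega),
            if_pos (show (i : ℕ) + 1 ≤ m by omega)]
          exact ho
        · have hile : (i : ℕ) ≤ m := Nat.lt_succ_iff.mp i.isLt
          have hi0 : i.val = m := by omega
          rw [if_neg hi, if_pos hile, if_neg (show ¬ ((i : ℕ) + 1 ≤ m) by omega), hi0]
          exact Or.inr ⟨hum.symm, hu0.symm⟩
    · -- exactly one active edge
      have : (Finset.univ.filter (fun i : Fin (m+1) => x (c i) = 1)) = {⟨m, by omega⟩} := by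
        ext i
        simp only [Finset.mem_filter, Finset.mem_univ, true_and, Finset.mem_singleton]
        constructor
        · intro hx
          by_cases hi : i.val < m
          · have h0 := (hedge i.val hi).1
            simp only [hc, hi, if_true] at hx
            omega
          · exact Fin.ext (show (i : ℕ) = m from by have := i.isLt; omega)
        · rintro rfl
          simp only [hc]
          rw [if_neg (lt_irrefl m)]
          exact h1
      simp [activeCount, this]

/-- transporting values of a map along a chain of equalities -/
lemma chain_eq {ι : Type} (g : ℕ → ι) (a b : ℕ) (hab : a ≤ b)
    (hstep : ∀ j, a ≤ j → j < b → g j = g (j + 1)) : g a = g b := by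
  induction b, hab using Nat.le_induction with
  | base => rfl
  | succ n hn ih =>
    exact (ih fun j hj hjn => hstep j hj (by omega)).trans (hstep n hn (by omega))

/-- A binary edge labeling is a multicut iff there is a partition of `V` (given by a
labeling `f`) such that `x_e = 1` exactly when the endpoints of `e` lie in different blocks,
and each block is connected in the subgraph of dormant edges. -/
theorem stmt4 {V E : Type} [Fintype V] (hd tl : E → V) (x : E → ℕ)
    (hbin : ∀ e, x e = 0 ∨ x e = 1) :
    IsMulticut hd tl x ↔
      ∃ (ι : Type) (f : V → ι),
        (∀ e, x e = 1 ↔ f (hd e) ≠ f (tl e)) ∧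
        ∀ u v' : V, f u = f v' → Relation.ReflTransGen (DormantAdj hd tl x) u v' := by
  constructor
  · intro hmc
    let s : Setoid V := ⟨Relation.ReflTransGen (DormantAdj hd tl x),
      ⟨fun _ => Relation.ReflTransGen.refl,
       fun h => haveI : Std.Symm (DormantAdj hd tl x) := ⟨fun _ _ => dormantAdj_symm hd tl x⟩
         (Std.Symm.iff _ _).mp h,
       fun h1 h2 => h1.trans h2⟩⟩
    refine ⟨Quotient s, Quotient.mk s, ?_, ?_⟩
    · intro e
      constructor
      · intro h1 hfe
        exact multicut_key hd tl x hmc h1 (Quotient.exact hfe)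
      · intro hne
        rcases hbin e with h0 | h1
        · exact absurd (Quotient.sound (Relation.ReflTransGen.single
            ⟨e, h0, Or.inl ⟨rfl, rfl⟩⟩)) hne
        · exact h1
    · intro u v' hfe
      exact Quotient.exact hfe
  · rintro ⟨ι, f, hiff, _⟩ n v c ⟨hn, hvlast, hvinj, hcinj, hinc⟩ hone
    -- there is a unique active edge index i₀
    obtain ⟨i₀, hi₀⟩ := Finset.card_eq_one.mp hone
    have hmem : ∀ i : Fin n, x (c i) = 1 ↔ i = i₀ := by
      intro i
      constructor
      · intro h
        have hmem' : i ∈ Finset.filter (fun i => x (c i) = 1) Finset.univ := by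
          simp [h]
        rwa [hi₀, Finset.mem_singleton] at hmem'
      · intro h
        have hmem' := Finset.mem_singleton_self i₀
        rw [← hi₀] at hmem'
        rw [h]
        exact (Finset.mem_filter.mp hmem').2
    -- f agrees across dormant edges of the cycle
    have hstep : ∀ i : Fin n, i ≠ i₀ → f (v i.castSucc) = f (v i.succ) := by
      intro i hi
      have hx0 : x (c i) ≠ 1 := fun h => hi ((hmem i).mp h)
      have hfeq : f (hd (c i)) = f (tl (c i)) := by
        by_contra hne
        exact hx0 ((hiff (c i)).mpr hne)
      rcases hinc i with ⟨ha, hb⟩ | ⟨ha, hb⟩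
      · rw [← ha, ← hb]; exact hfeq
      · rw [← ha, ← hb]; exact hfeq.symm
    have hactive : f (v i₀.castSucc) ≠ f (v i₀.succ) := by
      have hx1 : x (c i₀) = 1 := (hmem i₀).mpr rfl
      have := (hiff (c i₀)).mp hx1
      rcases hinc i₀ with ⟨ha, hb⟩ | ⟨ha, hb⟩
      · rw [← ha, ← hb]; exact this
      · rw [← ha, ← hb]; exact fun h => this h.symm
    -- walk around the cycle
    set g : ℕ → ι := fun j => f (v ⟨j % (n + 1), Nat.mod_lt _ (by omega)⟩) with hg
    have gval : ∀ (j : ℕ) (h : j < n + 1), g j = f (v ⟨j, h⟩) := by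
      intro j h
      simp only [hg]
      exact congrArg f (congrArg v (Fin.ext (Nat.mod_eq_of_lt h)))
    have hgstep : ∀ j, j < n → j ≠ i₀.val → g j = g (j + 1) := by
      intro j hj hji
      rw [gval j (by omega), gval (j + 1) (by omega)]
      exact hstep ⟨j, hj⟩ (fun h => hji (congrArg Fin.val h))
    have hk : i₀.val < n := i₀.isLt
    have c1 : g 0 = g i₀.val :=
      chain_eq g 0 i₀.val (by omega) (fun j _ hj => hgstep j (by omega) (by omega))
    have c2 : g (i₀.val + 1) = g n :=
      chain_eq g (i₀.val + 1) n (by omega) (fun j hj hj' => hgstep j hj' (by omega))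
    have hgn : g n = g 0 := by
      rw [gval n (by omega), gval 0 (by omega)]
      have e1 : (⟨n, by omega⟩ : Fin (n + 1)) = Fin.last n := Fin.ext (by simp)
      have e2 : (⟨0, by omega⟩ : Fin (n + 1)) = 0 := Fin.ext (by simp)
      rw [e1, e2, hvlast]
    have e1 : g i₀.val = f (v i₀.castSucc) := by
      rw [gval i₀.val (by omega)]
      exact congrArg f (congrArg v (Fin.ext (by simp)))
    have e2 : g (i₀.val + 1) = f (v i₀.succ) := by
      rw [gval (i₀.val + 1) (by omega)]
      exact congrArg f (congrArg v (Fin.ext (by simp)))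
    apply hactive
    rw [← e1, ← e2, ← c1, c2, hgn]
end

section
/- Let S_m be the set of multicut edge labelings of a finite graph G, and S_I^o the set of edge labelings x for which there exists w : V → ℝ with x_e = 1 ↔ w_{h_e} ≠ w_{t_e}. Then S_I^o = S_m. -/
/-- Telescoping lemma for the forward direction. -/
lemma telescope_aux {n : ℕ} (g : Fin (n + 1) → ℝ) (i0 : Fin n)
    (h : ∀ i : Fin n, i ≠ i0 → g i.succ = g i.castSucc)
    (hlast : g (Fin.last n) = g 0) :
    g i0.succ = g i0.castSucc := by
  have h1 : ∀ k : ℕ, (hk : k ≤ (i0 : ℕ)) → g ⟨k, by omega⟩ = g 0 := by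
    intro k
    induction k with
    | zero => intro _; rfl
    | succ m ih =>
      intro hk
      have hm : m < n := by have := i0.isLt; omega
      have hne : (⟨m, hm⟩ : Fin n) ≠ i0 := by
        intro hEq; apply_fun (Fin.val) at hEq; simp at hEq; omega
      have := h ⟨m, hm⟩ hne
      have e1 : (Fin.succ ⟨m, hm⟩ : Fin (n+1)) = ⟨m + 1, by omega⟩ := rfl
      have e2 : (Fin.castSucc ⟨m, hm⟩ : Fin (n+1)) = ⟨m, by omega⟩ := rfl
      rw [e1, e2] at this
      rw [this]; exact ih (by omega)
  have h2 : ∀ k : ℕ, (i0 : ℕ) + 1 ≤ k → (hk : k ≤ n) → g ⟨k, by omega⟩ = g i0.succ := by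
    intro k hk1
    induction k with
    | zero => omega
    | succ m ih =>
      intro hk
      rcases Nat.lt_or_ge (i0 : ℕ) m with hlt | hge
      · have hm : m < n := by omega
        have hne : (⟨m, hm⟩ : Fin n) ≠ i0 := by
          intro hEq; apply_fun (Fin.val) at hEq; simp at hEq; omega
        have := h ⟨m, hm⟩ hne
        have e1 : (Fin.succ ⟨m, hm⟩ : Fin (n+1)) = ⟨m + 1, by omega⟩ := rfl
        have e2 : (Fin.castSucc ⟨m, hm⟩ : Fin (n+1)) = ⟨m, by omega⟩ := rfl
        rw [e1, e2] at this
        rw [this]; exact ih (by omega) (by omega)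
      · have hmi : m = (i0 : ℕ) := by omega
        have e3 : (⟨m + 1, by omega⟩ : Fin (n+1)) = i0.succ := by
          ext; simp [hmi]
        rw [e3]
  have hA : g i0.castSucc = g 0 := by
    have := h1 (i0 : ℕ) le_rfl
    have e : (Fin.castSucc i0 : Fin (n+1)) = ⟨(i0 : ℕ), by omega⟩ := by ext; simp
    rw [e]; exact this
  have hB : g (Fin.last n) = g i0.succ := by
    have := h2 n (by have := i0.isLt; omega) le_rfl
    have e : (Fin.last n) = (⟨n, by omega⟩ : Fin (n+1)) := rfl
    rw [e]; exact this
  rw [← hB, hlast, ← hA]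

/-- The graph on `V` whose edges are the inactive edges of the labeling. -/
def inactiveGraph {V E : Type} (hd tl : E → V) (x : E → ℕ) : SimpleGraph V where
  Adj u v := u ≠ v ∧ ∃ e, x e = 0 ∧ ((hd e = u ∧ tl e = v) ∨ (tl e = u ∧ hd e = v))
  symm := by
    constructor
    rintro u v ⟨hne, e, hx, he⟩
    exact ⟨hne.symm, e, hx, by tauto⟩
  loopless := by constructor; rintro u ⟨h, _⟩; exact h rfl

/-- An active edge cannot be a self-loop, for a multicut. -/
lemma no_self_loop {V E : Type} (hd tl : E → V) (x : E → ℕ)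
    (hm : IsMulticut hd tl x) (e : E) (hx : x e = 1) : hd e ≠ tl e := by
  intro hEq
  apply hm 1 (fun _ => hd e) (fun _ => e)
  · refine ⟨one_pos, rfl, ?_, ?_, ?_⟩
    · intro a b _; exact Subsingleton.elim a b
    · intro a b _; exact Subsingleton.elim a b
    · intro i; left; exact ⟨rfl, hEq.symm⟩
  · unfold activeCount
    rw [Finset.filter_true_of_mem (fun i _ => hx)]
    simp

set_option maxHeartbeats 1000000 in
/-- For a multicut, the endpoints of an active edge are not connected by inactive edges. -/
lemma no_reach {V E : Type} (hd tl : E → V) (x : E → ℕ)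
    (hm : IsMulticut hd tl x) (e : E) (hx : x e = 1) :
    ¬ (inactiveGraph hd tl x).Reachable (tl e) (hd e) := by
  classical
  intro hr
  have hne : hd e ≠ tl e := no_self_loop hd tl x hm e hx
  obtain ⟨p⟩ := hr
  set G := inactiveGraph hd tl x
  set q : G.Walk (tl e) (hd e) := (p.toPath : G.Path (tl e) (hd e)).1 with hq
  have hqp : q.IsPath := (p.toPath).2
  set s := q.support with hs
  set m := q.length with hmdef
  have hslen : s.length = m + 1 := q.length_support
  have hslen' : q.support.length = m + 1 := q.length_support
  have hm1 : 1 ≤ m := by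
    by_contra hcon
    have h0 : q.length = 0 := by omega
    exact hne (q.eq_of_length_eq_zero h0).symm
  have hnodup : s.Nodup := hqp.support_nodup
  have hinj : Function.Injective s.get := List.nodup_iff_injective_get.mp hnodup
  have hget0 : s.get ⟨0, by omega⟩ = tl e := by
    have h1 : s = tl e :: q.support.tail := q.support_eq_cons
    rw [List.get_of_eq h1]
    rfl
  have hgetm : s.get ⟨m, by omega⟩ = hd e := by
    have h1 := q.getLast_support
    rw [List.getLast_eq_getElem] at h1
    convert h1 using 3
    simp only [List.get_eq_getElem, hs, hslen', Nat.add_sub_cancel]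
  have hadj : ∀ i : ℕ, (hi : i < m) → ∃ e', x e' = 0 ∧
      ((hd e' = s.get ⟨i, by omega⟩ ∧ tl e' = s.get ⟨i + 1, by omega⟩) ∨
       (tl e' = s.get ⟨i, by omega⟩ ∧ hd e' = s.get ⟨i + 1, by omega⟩)) := by
    intro i hi
    have hc := List.isChain_iff_getElem.mp q.isChain_adj_support i (by rw [← hs, hslen]; omega)
    obtain ⟨-, e', he'⟩ := hc
    exact ⟨e', he'⟩
  -- the cycle
  set c : Fin (m + 1) → E := fun i =>
    if h : (i : ℕ) < m then (hadj i h).choose else e with hc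
  set vv : Fin (m + 2) → V := fun i =>
    if h : (i : ℕ) < m + 1 then s.get ⟨i, by omega⟩ else s.get ⟨0, by omega⟩ with hvv
  have hgetc : ∀ (a b : ℕ) (ha : a < s.length) (hb : b < s.length), a = b →
      s.get ⟨a, ha⟩ = s.get ⟨b, hb⟩ := by
    rintro a b ha hb rfl; rfl
  have hvval : ∀ (j : Fin (m+2)) (hj : (j : ℕ) < m + 1), vv j = s.get ⟨(j : ℕ), by omega⟩ := by
    intro j hj
    simp only [hvv]
    rw [dif_pos hj]
  have hvval0 : ∀ (j : Fin (m+2)), ¬ ((j : ℕ) < m + 1) → vv j = s.get ⟨0, by omega⟩ := by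
    intro j hj
    simp only [hvv]
    rw [dif_neg hj]
  have hcyc : IsCycle hd tl vv c := by
    refine ⟨by omega, ?_, ?_, ?_, ?_⟩
    · show vv (Fin.last (m+1)) = vv 0
      rw [hvv]; simp
    · intro a b hab
      simp only [hvv] at hab
      have ha : ((Fin.castSucc a : Fin (m+2)) : ℕ) = (a : ℕ) := rfl
      have hb : ((Fin.castSucc b : Fin (m+2)) : ℕ) = (b : ℕ) := rfl
      rw [dif_pos (by rw [ha]; exact a.isLt), dif_pos (by rw [hb]; exact b.isLt)] at hab
      have := hinj hab
      ext
      simpa using congrArg Fin.val this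
    · intro a b hab
      simp only [hc] at hab
      by_cases ha : (a : ℕ) < m <;> by_cases hb : (b : ℕ) < m
      · rw [dif_pos ha, dif_pos hb] at hab
        have sa := (hadj a ha).choose_spec
        have sb := (hadj b hb).choose_spec
        rw [hab] at sa
        obtain ⟨-, sa2⟩ := sa
        obtain ⟨-, sb2⟩ := sb
        have key : ((a : ℕ) = (b : ℕ) ∧ (a : ℕ) + 1 = (b : ℕ) + 1) ∨
            ((a : ℕ) = (b : ℕ) + 1 ∧ (a : ℕ) + 1 = (b : ℕ)) := by
          rcases sa2 with ⟨h1, h2⟩ | ⟨h1, h2⟩ <;> rcases sb2 with ⟨h3, h4⟩ | ⟨h3, h4⟩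
          · left
            constructor
            · have := hinj (h1.symm.trans h3)
              simpa using congrArg Fin.val this
            · have := hinj (h2.symm.trans h4)
              simpa using congrArg Fin.val this
          · right
            constructor
            · have := hinj (h1.symm.trans h4)
              simpa using congrArg Fin.val this
            · have := hinj (h2.symm.trans h3)
              simpa using congrArg Fin.val this
          · right
            constructor
            · have := hinj (h1.symm.trans h4)
              simpa using congrArg Fin.val this
            · have := hinj (h2.symm.trans h3)
              simpa using congrArg Fin.val this
          · left
            constructor
            · have := hinj (h1.symm.trans h3)
              simpa using congrArg Fin.val this
            · have := hinj (h2.symm.trans h4)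
              simpa using congrArg Fin.val this
        ext; omega
      · rw [dif_pos ha, dif_neg hb] at hab
        have sa := (hadj a ha).choose_spec
        rw [hab] at sa
        rw [sa.1] at hx; omega
      · rw [dif_neg ha, dif_pos hb] at hab
        have sb := (hadj b hb).choose_spec
        rw [← hab] at sb
        rw [sb.1] at hx; omega
      · ext; have := a.isLt; have := b.isLt; omega
    · intro i
      by_cases hi : (i : ℕ) < m
      · have sp := (hadj i hi).choose_spec
        have hci : c i = (hadj i hi).choose := by rw [hc]; exact dif_pos hi
        have hv1 : vv i.castSucc = s.get ⟨(i : ℕ), by omega⟩ :=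
          (hvval i.castSucc (by rw [Fin.coe_castSucc]; omega)).trans
            (hgetc _ _ _ _ (by rw [Fin.coe_castSucc]))
        have hv2 : vv i.succ = s.get ⟨(i : ℕ) + 1, by omega⟩ :=
          (hvval i.succ (by rw [Fin.val_succ]; omega)).trans
            (hgetc _ _ _ _ (by rw [Fin.val_succ]))
        rw [hci, hv1, hv2]
        exact sp.2
      · have him : (i : ℕ) = m := by have := i.isLt; omega
        have hci : c i = e := by rw [hc]; exact dif_neg hi
        have hv1 : vv i.castSucc = s.get ⟨m, by omega⟩ :=
          (hvval i.castSucc (by rw [Fin.coe_castSucc]; omega)).trans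
            (hgetc _ _ _ _ (by rw [Fin.coe_castSucc, him]))
        have hv2 : vv i.succ = s.get ⟨0, by omega⟩ :=
          hvval0 i.succ (by rw [Fin.val_succ]; omega)
        left
        rw [hci, hv1, hv2, hgetm, hget0]
        exact ⟨rfl, rfl⟩
  apply hm (m + 1) vv c hcyc
  unfold activeCount
  have : (Finset.univ.filter (fun i : Fin (m+1) => x (c i) = 1)) = {⟨m, by omega⟩} := by
    ext i
    simp only [Finset.mem_filter, Finset.mem_univ, true_and, Finset.mem_singleton]
    constructor
    · intro hxi
      by_cases hi : (i : ℕ) < m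
      · exfalso
        have hci : c i = (hadj i hi).choose := by rw [hc]; exact dif_pos hi
        rw [hci, (hadj i hi).choose_spec.1] at hxi; omega
      · have hvm : (i : ℕ) = m := by have := i.isLt; omega
        exact Fin.ext hvm
    · intro hi
      subst hi
      have hci : c ⟨m, by omega⟩ = e := by rw [hc]; exact dif_neg (by simp)
      rw [hci]; exact hx
  rw [this]; simp

/-- `S_I^o = S_m`: the set of binary edge labelings arising from some `w : V → ℝ` via
`x_e = 1 ↔ w_{h_e} ≠ w_{t_e}` equals the set of binary multicut labelings. -/
theorem stmt12 {V E : Type} [Fintype V] (hd tl : E → V) :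
    {x : E → ℕ | (∀ e, x e = 0 ∨ x e = 1) ∧
        ∃ w : V → ℝ, ∀ e, x e = 1 ↔ w (hd e) ≠ w (tl e)} =
      {x : E → ℕ | (∀ e, x e = 0 ∨ x e = 1) ∧ IsMulticut hd tl x} := by
  classical
  ext x
  simp only [Set.mem_setOf_eq]
  constructor
  · rintro ⟨hb, w, hw⟩
    refine ⟨hb, ?_⟩
    intro n v c hcyc hcount
    obtain ⟨hn, hlast, hvinj, hcinj, hedge⟩ := hcyc
    obtain ⟨i0, hi0⟩ := Finset.card_eq_one.mp hcount
    have hi0mem : i0 ∈ Finset.univ.filter (fun i : Fin n => x (c i) = 1) := by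
      rw [hi0]; exact Finset.mem_singleton_self _
    have hxi0 : x (c i0) = 1 := (Finset.mem_filter.mp hi0mem).2
    have honly : ∀ i : Fin n, i ≠ i0 → x (c i) ≠ 1 := by
      intro i hne hxi
      apply hne
      have : i ∈ Finset.univ.filter (fun i : Fin n => x (c i) = 1) :=
        Finset.mem_filter.mpr ⟨Finset.mem_univ _, hxi⟩
      rw [hi0, Finset.mem_singleton] at this
      exact this
    have key : (fun i => w (v i)) (Fin.succ i0) = (fun i => w (v i)) (Fin.castSucc i0) := by
      apply telescope_aux (fun i => w (v i)) i0
      · intro i hne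
        have hwe : ¬ (w (hd (c i)) ≠ w (tl (c i))) := fun hc => honly i hne ((hw (c i)).mpr hc)
        push_neg at hwe
        rcases hedge i with ⟨h1, h2⟩ | ⟨h1, h2⟩
        · show w (v (Fin.succ i)) = w (v (Fin.castSucc i))
          rw [← h1, ← h2, hwe]
        · show w (v (Fin.succ i)) = w (v (Fin.castSucc i))
          rw [← h1, ← h2, hwe]
      · show w (v (Fin.last n)) = w (v 0)
        rw [hlast]
    have hne' : w (hd (c i0)) ≠ w (tl (c i0)) := (hw (c i0)).mp hxi0
    rcases hedge i0 with ⟨h1, h2⟩ | ⟨h1, h2⟩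
    · apply hne'
      rw [h1, h2]
      exact key.symm
    · apply hne'
      rw [h1, h2]
      exact key
  · rintro ⟨hb, hm⟩
    refine ⟨hb, ?_⟩
    set G := inactiveGraph hd tl x with hG
    set f : V → ℕ := fun v => ((Fintype.equivFin V) v : ℕ) with hf
    have hfinj : Function.Injective f := by
      intro a b hab
      apply (Fintype.equivFin V).injective
      exact Fin.ext hab
    set cls : V → Finset V := fun v => Finset.univ.filter (fun u => G.Reachable u v) with hcls
    have hmem : ∀ v, v ∈ cls v := fun v =>
      Finset.mem_filter.mpr ⟨Finset.mem_univ _, SimpleGraph.Reachable.refl v⟩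
    have hne : ∀ v, ((cls v).image f).Nonempty := fun v =>
      ⟨f v, Finset.mem_image_of_mem f (hmem v)⟩
    set w : V → ℝ := fun v => (((cls v).image f).min' (hne v) : ℝ) with hwdef
    have hcls_eq : ∀ a b, G.Reachable a b → cls a = cls b := by
      intro a b hab
      ext u
      simp only [hcls, Finset.mem_filter, Finset.mem_univ, true_and]
      exact ⟨fun h => h.trans hab, fun h => h.trans hab.symm⟩
    have hmin : ∀ (s t : Finset ℕ) (hs : s.Nonempty) (ht : t.Nonempty), s = t →
        s.min' hs = t.min' ht := by
      rintro s t hs ht rfl; rfl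
    have hw_eq : ∀ a b, G.Reachable a b → w a = w b := by
      intro a b hab
      simp only [hwdef]
      exact congrArg _ (hmin _ _ _ _ (by rw [hcls_eq a b hab]))
    have hw_rev : ∀ a b, w a = w b → G.Reachable a b := by
      intro a b hab
      simp only [hwdef] at hab
      have hab' : ((cls a).image f).min' (hne a) = ((cls b).image f).min' (hne b) := by
        exact_mod_cast hab
      have hma := Finset.min'_mem ((cls a).image f) (hne a)
      have hmb := Finset.min'_mem ((cls b).image f) (hne b)
      obtain ⟨p, hp, hfp⟩ := Finset.mem_image.mp hma
      obtain ⟨q, hq, hfq⟩ := Finset.mem_image.mp hmb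
      have : p = q := hfinj (by rw [hfp, hfq, hab'])
      subst this
      have hpa : G.Reachable p a := (Finset.mem_filter.mp hp).2
      have hpb : G.Reachable p b := (Finset.mem_filter.mp hq).2
      exact hpa.symm.trans hpb
    refine ⟨w, ?_⟩
    intro e
    rcases hb e with h0 | h1
    · constructor
      · intro h; omega
      · intro hne'
        exfalso
        apply hne'
        apply hw_eq
        by_cases heq : hd e = tl e
        · rw [heq]
        · exact SimpleGraph.Adj.reachable ⟨heq, e, h0, Or.inl ⟨rfl, rfl⟩⟩
    · constructor
      · intro _ hweq
        exact no_reach hd tl x hm e h1 ((hw_rev _ _ hweq).symm)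
      · intro _; exact h1
end
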